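/- Let φ : ℕ → ℝ≥0 be nondecreasing, concave, normalized (φ(0)=0, φ(1)=1), extended piecewise linearly to ℝ≥0, and let α_φ(x) = E[φ(Poi(x))]/φ(x). Then for every ε > 0 and all x ≥ (6/ε)^4, we have 1 - α_φ(x) ≤ ε. -/

import Mathlib

open Finset

/-- The Poisson expectation `E[φ(Poi x)]`. -/
noncomputable def poiExp (φ : ℕ → ℝ) (x : ℝ) : ℝ :=
  ∑' k : ℕ, Real.exp (-x) * x ^ k / (Nat.factorial k) * φ k

/-- The piecewise linear extension of `φ : ℕ → ℝ` to `ℝ≥0`. -/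
noncomputable def phiExt (φ : ℕ → ℝ) (x : ℝ) : ℝ :=
  φ ⌊x⌋₊ + (x - ⌊x⌋₊) * (φ (⌊x⌋₊ + 1) - φ ⌊x⌋₊)

/-- The Poisson concavity ratio `α_φ(x) = E[φ(Poi x)] / φ(x)`, with `α_φ(0) = 1`. -/
noncomputable def alphaRatio (φ : ℕ → ℝ) (x : ℝ) : ℝ :=
  if x = 0 then 1 else poiExp φ x / phiExt φ x

/- ### Poisson series lemmas -/

lemma tsum_q (x : ℝ) : ∑' k : ℕ, x ^ k / (Nat.factorial k) = Real.exp x := by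
  rw [Real.exp_eq_exp_ℝ, NormedSpace.exp_eq_tsum_div]

lemma shift1 (x : ℝ) (n : ℕ) :
    ((n+1 : ℕ) : ℝ) * (x ^ (n+1) / (Nat.factorial (n+1))) = x * (x ^ n / (Nat.factorial n)) := by
  have h : ((Nat.factorial n : ℕ) : ℝ) ≠ 0 := Nat.cast_ne_zero.mpr (Nat.factorial_ne_zero n)
  rw [Nat.factorial_succ, pow_succ]
  push_cast
  field_simp

lemma shift2 (x : ℝ) (n : ℕ) :
    ((n+2 : ℕ) : ℝ) * (((n+2 : ℕ) : ℝ) - 1) * (x ^ (n+2) / (Nat.factorial (n+2)))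
      = x^2 * (x ^ n / (Nat.factorial n)) := by
  have h : ((Nat.factorial n : ℕ) : ℝ) ≠ 0 := Nat.cast_ne_zero.mpr (Nat.factorial_ne_zero n)
  rw [Nat.factorial_succ, Nat.factorial_succ]
  push_cast
  field_simp
  ring

lemma summable_kq (x : ℝ) : Summable (fun k : ℕ => (k : ℝ) * (x ^ k / (Nat.factorial k))) := by
  apply (summable_nat_add_iff 1).mp
  exact ((Real.summable_pow_div_factorial x).mul_left x).congr fun n => (shift1 x n).symm

lemma summable_kkq (x : ℝ) :
    Summable (fun k : ℕ => (k : ℝ) * ((k:ℝ)-1) * (x ^ k / (Nat.factorial k))) := by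
  apply (summable_nat_add_iff 2).mp
  exact ((Real.summable_pow_div_factorial x).mul_left (x^2)).congr fun n => (shift2 x n).symm

lemma tsum_kq (x : ℝ) : ∑' k : ℕ, (k : ℝ) * (x ^ k / (Nat.factorial k)) = x * Real.exp x := by
  rw [Summable.tsum_eq_zero_add (summable_kq x)]
  have h1 : ∑' n : ℕ, ((n+1 : ℕ) : ℝ) * (x ^ (n+1) / (Nat.factorial (n+1)))
      = ∑' n : ℕ, x * (x ^ n / (Nat.factorial n)) := tsum_congr (shift1 x)
  simp only [h1, tsum_mul_left, tsum_q]
  simp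

lemma tsum_kkq (x : ℝ) :
    ∑' k : ℕ, (k : ℝ) * ((k:ℝ)-1) * (x ^ k / (Nat.factorial k)) = x^2 * Real.exp x := by
  rw [Summable.tsum_eq_zero_add (summable_kkq x)]
  rw [Summable.tsum_eq_zero_add ((summable_nat_add_iff 1).mpr (summable_kkq x))]
  have h1 : ∑' n : ℕ, ((n+1+1 : ℕ) : ℝ) * (((n+1+1 : ℕ):ℝ)-1) * (x ^ (n+1+1) / (Nat.factorial (n+1+1)))
      = ∑' n : ℕ, x^2 * (x ^ n / (Nat.factorial n)) := tsum_congr fun n => shift2 x n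
  simp only [h1, tsum_mul_left, tsum_q]
  simp

lemma summable_central (x : ℝ) :
    Summable (fun k : ℕ => (x - k)^2 * (x ^ k / (Nat.factorial k))) := by
  have h := (((Real.summable_pow_div_factorial x).mul_left (x^2)).add
    ((summable_kq x).mul_left (1-2*x))).add (summable_kkq x)
  exact h.congr fun k => by ring

lemma tsum_central (x : ℝ) :
    ∑' k : ℕ, (x - k)^2 * (x ^ k / (Nat.factorial k)) = x * Real.exp x := by
  have key : ∀ k : ℕ, (x - k)^2 * (x ^ k / (Nat.factorial k))
      = x^2 * (x ^ k / (Nat.factorial k)) + (1-2*x) * ((k:ℝ) * (x ^ k / (Nat.factorial k)))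
        + ((k:ℝ) * ((k:ℝ)-1) * (x ^ k / (Nat.factorial k))) := by intro k; ring
  rw [tsum_congr key]
  rw [Summable.tsum_add (((Real.summable_pow_div_factorial x).mul_left _).add
      ((summable_kq x).mul_left _)) (summable_kkq x)]
  rw [Summable.tsum_add ((Real.summable_pow_div_factorial x).mul_left _) ((summable_kq x).mul_left _)]
  rw [tsum_mul_left, tsum_mul_left, tsum_q, tsum_kq, tsum_kkq]
  ring

/- ### Concavity lemmas -/

section Concave
variable {φ : ℕ → ℝ}

lemma d_anti (hφconc : ∀ k, φ (k + 2) - φ (k + 1) ≤ φ (k + 1) - φ k) :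
    Antitone (fun k => φ (k+1) - φ k) :=
  antitone_nat_of_succ_le fun n => hφconc n

lemma phi_eq_sum (hφ0 : φ 0 = 0) (n : ℕ) : φ n = ∑ k ∈ Finset.range n, (φ (k+1) - φ k) := by
  rw [Finset.sum_range_sub, hφ0, sub_zero]

lemma phi_le_k (hφ0 : φ 0 = 0) (hφ1 : φ 1 = 1)
    (hφconc : ∀ k, φ (k + 2) - φ (k + 1) ≤ φ (k + 1) - φ k) (k : ℕ) : φ k ≤ k := by
  rw [phi_eq_sum hφ0]
  calc ∑ j ∈ range k, (φ (j+1) - φ j) ≤ (range k).card • (1:ℝ) := by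
        apply Finset.sum_le_card_nsmul
        intro j _
        have := d_anti hφconc (Nat.zero_le j)
        simpa [hφ0, hφ1] using this
    _ = k := by simp

lemma mul_d_le (hφ0 : φ 0 = 0)
    (hφconc : ∀ k, φ (k + 2) - φ (k + 1) ≤ φ (k + 1) - φ k) {m j : ℕ} (h : m ≤ j + 1) :
    (m:ℝ) * (φ (j+1) - φ j) ≤ φ m := by
  rw [phi_eq_sum hφ0 m]
  have := Finset.card_nsmul_le_sum (Finset.range m) (fun k => φ (k+1) - φ k) (φ (j+1) - φ j)
    (fun k hk => d_anti hφconc (by simp at hk; omega : k ≤ j))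
  simpa [nsmul_eq_mul] using this

lemma phiExt_le_aux (hφ0 : φ 0 = 0)
    (hφconc : ∀ k, φ (k + 2) - φ (k + 1) ≤ φ (k + 1) - φ k)
    {m n : ℕ} (hm : 1 ≤ m) (hmn : m ≤ n) {x : ℝ} (hx : (n:ℝ) ≤ x) :
    φ n + (x - n) * (φ (n+1) - φ n) ≤ x * φ m / m := by
  have hm0 : (0:ℝ) < m := by exact_mod_cast hm
  set c : ℝ := φ m / m with hc
  have hdc : ∀ j : ℕ, m ≤ j + 1 → φ (j+1) - φ j ≤ c := by
    intro j hj
    rw [hc, le_div_iff₀ hm0]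
    have := mul_d_le hφ0 hφconc hj
    linarith
  have hsum : φ n - φ m = ∑ k ∈ Finset.Ico m n, (φ (k+1) - φ k) := by
    rw [Finset.sum_Ico_eq_sub _ hmn, ← phi_eq_sum hφ0, ← phi_eq_sum hφ0]
  have hbound : φ n - φ m ≤ ((n:ℝ) - m) * c := by
    rw [hsum]
    calc ∑ k ∈ Finset.Ico m n, (φ (k+1) - φ k) ≤ (Finset.Ico m n).card • c := by
          apply Finset.sum_le_card_nsmul
          intro k hk
          exact hdc k (by simp at hk; omega)
      _ = ((n:ℝ) - m) * c := by
          rw [Nat.card_Ico, nsmul_eq_mul, Nat.cast_sub hmn]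
  have hdn : φ (n+1) - φ n ≤ c := hdc n (by omega)
  have hφmc : φ m = m * c := by rw [hc]; field_simp [hm0.ne']
  have hxn : 0 ≤ x - n := by linarith
  have h2 : (x - n) * (φ (n+1) - φ n) ≤ (x - n) * c :=
    mul_le_mul_of_nonneg_left hdn hxn
  have h3 : φ n + (x - n) * (φ (n+1) - φ n) ≤ x * c := by nlinarith
  calc φ n + (x - n) * (φ (n+1) - φ n) ≤ x * c := h3
    _ = x * φ m / m := by rw [hc]; ring

end Concave

set_option maxHeartbeats 1000000 in
/-- For every `ε > 0` and all `x ≥ (6/ε)^4`, `1 - α_φ(x) ≤ ε`. -/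
theorem stmt5 (φ : ℕ → ℝ) (hφnn : ∀ k, 0 ≤ φ k) (hφ0 : φ 0 = 0) (hφ1 : φ 1 = 1)
    (hφmono : Monotone φ)
    (hφconc : ∀ k, φ (k + 2) - φ (k + 1) ≤ φ (k + 1) - φ k) :
    ∀ ε : ℝ, 0 < ε → ∀ x : ℝ, (6 / ε) ^ 4 ≤ x → 1 - alphaRatio φ x ≤ ε := by
  intro ε hε x hx
  have hx0 : 0 < x := lt_of_lt_of_le (by positivity) hx
  have hq0 : ∀ k : ℕ, (0:ℝ) ≤ Real.exp (-x) * x ^ k / (Nat.factorial k) := fun k =>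
    div_nonneg (mul_nonneg (Real.exp_nonneg _) (pow_nonneg hx0.le k)) (Nat.cast_nonneg _)
  have hE0 : 0 ≤ poiExp φ x := tsum_nonneg fun k => mul_nonneg (hq0 k) (hφnn k)
  by_cases hε6 : 6 ≤ ε
  · -- trivial case: 1 - α ≤ 1 < ε
    have hα : 0 ≤ alphaRatio φ x := by
      rw [alphaRatio, if_neg hx0.ne']
      apply div_nonneg hE0
      unfold phiExt
      have h1 : (⌊x⌋₊:ℝ) ≤ x := Nat.floor_le hx0.le
      have h2 := hφnn ⌊x⌋₊
      have h3 : φ ⌊x⌋₊ ≤ φ (⌊x⌋₊ + 1) := hφmono (Nat.le_succ _)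
      nlinarith
    linarith
  push_neg at hε6
  set δ : ℝ := ε / 6 with hδdef
  have hδ0 : 0 < δ := by positivity
  have hδ1 : δ < 1 := by rw [hδdef]; linarith
  have ht : (1:ℝ) ≤ 6 / ε := by rw [le_div_iff₀ hε]; linarith
  have hx1 : (1:ℝ) ≤ x := le_trans (one_le_pow₀ ht) hx
  have hxδ : 1 ≤ x * δ := by
    have h1 : (6/ε)^4 * δ ≤ x * δ := mul_le_mul_of_nonneg_right hx hδ0.le
    have h2 : (6/ε)^4 * δ = (6/ε)^3 := by rw [hδdef]; field_simp
    have h3 : (1:ℝ) ≤ (6/ε)^3 := one_le_pow₀ ht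
    linarith
  set m : ℕ := ⌊x*(1-δ)⌋₊ + 1 with hmdef
  have hxδ0 : 0 ≤ x * (1-δ) := by nlinarith
  have hfl : (⌊x*(1-δ)⌋₊ : ℝ) ≤ x*(1-δ) := Nat.floor_le hxδ0
  have hmgt : x*(1-δ) < m := by
    have := Nat.lt_floor_add_one (x*(1-δ))
    rw [hmdef]; push_cast; linarith
  have hmlex : (m:ℝ) ≤ x := by
    rw [hmdef]; push_cast; nlinarith
  have hmn : m ≤ ⌊x⌋₊ := Nat.le_floor hmlex
  have hm1 : 1 ≤ m := by omega
  have hm0 : (0:ℝ) < m := by exact_mod_cast hm1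
  -- the lower tail
  set T : ℝ := ∑ k ∈ Finset.range m, Real.exp (-x) * x ^ k / (Nat.factorial k) with hTdef
  have hT0 : 0 ≤ T := Finset.sum_nonneg fun k _ => hq0 k
  -- Chebyshev bound
  have cheb : (x*δ)^2 * T ≤ x := by
    have step1 : ∀ k ∈ Finset.range m, (x*δ)^2 * (Real.exp (-x) * x ^ k / (Nat.factorial k))
        ≤ Real.exp (-x) * ((x - k)^2 * (x ^ k / (Nat.factorial k))) := by
      intro k hk
      have hkm : (k:ℝ) ≤ x*(1-δ) := by
        have h1 : k ≤ ⌊x*(1-δ)⌋₊ := by have := Finset.mem_range.mp hk; omega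
        calc (k:ℝ) ≤ (⌊x*(1-δ)⌋₊ : ℝ) := by exact_mod_cast h1
          _ ≤ x*(1-δ) := hfl
      have hsq : (x*δ)^2 ≤ (x - k)^2 := by nlinarith
      have h := mul_le_mul_of_nonneg_right hsq (hq0 k)
      have heq : (x - (k:ℝ))^2 * (Real.exp (-x) * x ^ k / (Nat.factorial k))
          = Real.exp (-x) * ((x - (k:ℝ))^2 * (x ^ k / (Nat.factorial k))) := by ring
      linarith
    calc (x*δ)^2 * T
        = ∑ k ∈ Finset.range m, (x*δ)^2 * (Real.exp (-x) * x ^ k / (Nat.factorial k)) := by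
          rw [hTdef, Finset.mul_sum]
      _ ≤ ∑ k ∈ Finset.range m, Real.exp (-x) * ((x - k)^2 * (x ^ k / (Nat.factorial k))) :=
          Finset.sum_le_sum step1
      _ = Real.exp (-x) * ∑ k ∈ Finset.range m, ((x - k)^2 * (x ^ k / (Nat.factorial k))) := by
          rw [Finset.mul_sum]
      _ ≤ Real.exp (-x) * ∑' k : ℕ, ((x - k)^2 * (x ^ k / (Nat.factorial k))) := by
          apply mul_le_mul_of_nonneg_left _ (Real.exp_nonneg _)
          exact Summable.sum_le_tsum _ (fun k _ => mul_nonneg (sq_nonneg _)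
            (div_nonneg (pow_nonneg hx0.le k) (Nat.cast_nonneg _))) (summable_central x)
      _ = x := by
          rw [tsum_central, Real.exp_neg]
          field_simp
  -- T ≤ ε²/36
  have hTε : T ≤ ε^2/36 := by
    have h1 : (6/ε)^2 ≤ x * δ^2 := by
      have h2 : (6/ε)^4 * δ^2 ≤ x * δ^2 :=
        mul_le_mul_of_nonneg_right hx (by positivity)
      have h3 : (6/ε)^4 * δ^2 = (6/ε)^2 := by rw [hδdef]; field_simp
      linarith
    have hA : x * δ^2 * T ≤ 1 := by nlinarith [cheb]
    have hB : (6/ε)^2 * T ≤ 1 := le_trans (mul_le_mul_of_nonneg_right h1 hT0) hA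
    have h8 := mul_le_mul_of_nonneg_left hB (by positivity : (0:ℝ) ≤ ε^2/36)
    have h9 : ε^2/36 * ((6/ε)^2 * T) = T := by field_simp; ring
    linarith
  -- total mass one
  have hsum_p : Summable (fun k : ℕ => Real.exp (-x) * x ^ k / (Nat.factorial k)) :=
    ((Real.summable_pow_div_factorial x).mul_left (Real.exp (-x))).congr fun k => by ring
  have hp1 : ∑' k : ℕ, Real.exp (-x) * x ^ k / (Nat.factorial k) = 1 := by
    have h : ∀ k : ℕ, Real.exp (-x) * x ^ k / (Nat.factorial k)
        = Real.exp (-x) * (x ^ k / (Nat.factorial k)) := fun k => by ring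
    rw [tsum_congr h, tsum_mul_left, tsum_q, ← Real.exp_add]
    simp
  -- summability of the expectation series
  have hsum_t : Summable (fun k : ℕ => Real.exp (-x) * x ^ k / (Nat.factorial k) * φ k) := by
    apply Summable.of_nonneg_of_le (fun k => mul_nonneg (hq0 k) (hφnn k))
      (fun k => ?_) ((summable_kq x).mul_left (Real.exp (-x)))
    calc Real.exp (-x) * x ^ k / (Nat.factorial k) * φ k
        ≤ Real.exp (-x) * x ^ k / (Nat.factorial k) * k :=
          mul_le_mul_of_nonneg_left (phi_le_k hφ0 hφ1 hφconc k) (hq0 k)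
      _ = Real.exp (-x) * ((k:ℝ) * (x ^ k / (Nat.factorial k))) := by ring
  -- lower bound on poiExp
  have hE : φ m * (1 - T) ≤ poiExp φ x := by
    have hsplit := Summable.sum_add_tsum_nat_add
      (f := fun k : ℕ => Real.exp (-x) * x ^ k / (Nat.factorial k) * φ k) m hsum_t
    have h1 : 0 ≤ ∑ k ∈ Finset.range m, Real.exp (-x) * x ^ k / (Nat.factorial k) * φ k :=
      Finset.sum_nonneg fun k _ => mul_nonneg (hq0 k) (hφnn k)
    have h2 : ∑' k : ℕ, Real.exp (-x) * x ^ (k+m) / (Nat.factorial (k+m)) * φ m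
        ≤ ∑' k : ℕ, Real.exp (-x) * x ^ (k+m) / (Nat.factorial (k+m)) * φ (k+m) := by
      apply Summable.tsum_le_tsum
      · intro k
        exact mul_le_mul_of_nonneg_left (hφmono (Nat.le_add_left m k)) (hq0 (k+m))
      · exact (summable_nat_add_iff m).mpr (hsum_p.mul_right (φ m))
      · exact (summable_nat_add_iff m).mpr hsum_t
    have h5 := Summable.sum_add_tsum_nat_add
      (f := fun k : ℕ => Real.exp (-x) * x ^ k / (Nat.factorial k)) m hsum_p
    rw [hp1] at h5
    have h4 : ∑' k : ℕ, Real.exp (-x) * x ^ (k+m) / (Nat.factorial (k+m)) * φ m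
        = (∑' k : ℕ, Real.exp (-x) * x ^ (k+m) / (Nat.factorial (k+m))) * φ m := tsum_mul_right
    have h6 : (∑' k : ℕ, Real.exp (-x) * x ^ (k+m) / (Nat.factorial (k+m))) = 1 - T := by
      rw [← hTdef] at h5; linarith
    rw [h6] at h4
    rw [poiExp, ← hsplit]
    nlinarith [h2, h4, h1]
  -- bounds on phiExt
  have hnx : (⌊x⌋₊:ℝ) ≤ x := Nat.floor_le hx0.le
  have hext_le : phiExt φ x ≤ x * φ m / m := by
    unfold phiExt
    exact phiExt_le_aux hφ0 hφconc hm1 hmn hnx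
  have hn1 : 1 ≤ ⌊x⌋₊ := Nat.le_floor (by exact_mod_cast hx1)
  have hext_ge : (1:ℝ) ≤ phiExt φ x := by
    unfold phiExt
    have h1 : (1:ℝ) ≤ φ ⌊x⌋₊ := by have := hφmono hn1; rwa [hφ1] at this
    have h3 : φ ⌊x⌋₊ ≤ φ (⌊x⌋₊ + 1) := hφmono (Nat.le_succ _)
    nlinarith
  have hφm1 : (1:ℝ) ≤ φ m := by have := hφmono hm1; rwa [hφ1] at this
  -- the ratio bound
  have hα : (m:ℝ) * (1 - T) / x ≤ alphaRatio φ x := by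
    rw [alphaRatio, if_neg hx0.ne']
    have hd0 : 0 < x * φ m / m := by positivity
    calc (m:ℝ) * (1 - T) / x = (φ m * (1 - T)) / (x * φ m / m) := by
          rw [div_div_eq_mul_div]
          rw [div_eq_div_iff hx0.ne' (by positivity)]
          ring
      _ ≤ poiExp φ x / (x * φ m / m) := (div_le_div_iff_of_pos_right hd0).mpr hE
      _ ≤ poiExp φ x / phiExt φ x :=
          div_le_div_of_nonneg_left hE0 (by linarith) hext_le
  -- final arithmetic
  have key : (1 - ε) * x ≤ (m:ℝ) * (1 - T) := by
    nlinarith [mul_le_mul_of_nonneg_right hmlex hT0,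
      mul_le_mul_of_nonneg_left hTε hx0.le,
      mul_nonneg (mul_pos hx0 hε).le (show (0:ℝ) ≤ 6 - ε by linarith),
      hmgt.le, hδdef]
  have hfin : 1 - (m:ℝ) * (1 - T) / x ≤ ε := by
    rw [sub_le_iff_le_add]
    rw [← sub_le_iff_le_add']
    rw [le_div_iff₀ hx0]
    linarith
  linarith
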